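/- Let I be a symmetric positive definite 3×3 inertia matrix, K_R = diag(k₁,k₂,k₃) positive, Ψ(R_e) = (1/2)tr(K_R(I₃ − R_e)), and consider the closed-loop attitude error dynamics with control torque τ_c = −R_dᵀe_R − K_ω e_ω + I·ω̇_d + ω_d × I·ω applied to I·ω̇ = −ω × I·ω + τ_c. Then along trajectories, the function V_R = (1/2)e_ωᵀ·I·e_ω + Ψ(R_e) satisfies V̇_R = −e_ωᵀ·K_ω·e_ω ≤ 0. -/

import Mathlib

open Matrix

noncomputable section

/-- The special orthogonal group SO(3) as a set of real 3×3 matrices. -/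
def SO3 : Set (Matrix (Fin 3) (Fin 3) ℝ) := {R | Rᵀ * R = 1 ∧ R.det = 1}

/-- The hat map: hat(x)·y = x × y. -/
def hat (x : Fin 3 → ℝ) : Matrix (Fin 3) (Fin 3) ℝ :=
  !![0, -x 2, x 1; x 2, 0, -x 0; -x 1, x 0, 0]

/-- The vee map, inverse of hat on skew-symmetric matrices. -/
def vee (A : Matrix (Fin 3) (Fin 3) ℝ) : Fin 3 → ℝ := ![A 2 1, A 0 2, A 1 0]

/-- Skew-symmetric part of a matrix. -/
def skew (A : Matrix (Fin 3) (Fin 3) ℝ) : Matrix (Fin 3) (Fin 3) ℝ := (1/2 : ℝ) • (A - Aᵀ)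

/-- Euclidean norm on ℝ³. -/
def norm3 (x : Fin 3 → ℝ) : ℝ := Real.sqrt (∑ i, x i ^ 2)

/-- Error navigation function Ψ(R) = ½ tr(K (I − R)). -/
def Psi (K R : Matrix (Fin 3) (Fin 3) ℝ) : ℝ := (1/2) * (K * (1 - R)).trace

lemma vee_hat (x : Fin 3 → ℝ) : vee (hat x) = x := by
  funext i; fin_cases i <;> simp [vee, hat]

lemma hat_vee_skew (A : Matrix (Fin 3) (Fin 3) ℝ) : hat (vee (skew A)) = skew A := by
  ext i j; fin_cases i <;> fin_cases j <;>
    simp [hat, vee, skew, Matrix.transpose_apply] <;> ring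

lemma hat_conj (M : Matrix (Fin 3) (Fin 3) ℝ) (x : Fin 3 → ℝ) :
    Mᵀ * hat (M.mulVec x) * M = M.det • hat x := by
  ext i j
  fin_cases i <;> fin_cases j <;>
    simp [hat, Matrix.mul_apply, Matrix.mulVec, dotProduct, Matrix.det_fin_three,
      Fin.sum_univ_succ, Matrix.transpose_apply, Matrix.smul_apply] <;> ring

lemma trace_mul_hat (A : Matrix (Fin 3) (Fin 3) ℝ) (x : Fin 3 → ℝ) :
    (A * hat x).trace = -2 * (x ⬝ᵥ vee (skew A)) := by
  simp [Matrix.trace, Matrix.mul_apply, hat, vee, skew, dotProduct, Fin.sum_univ_succ,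
    Matrix.transpose_apply]
  ring

lemma vee_conj (Rd B : Matrix (Fin 3) (Fin 3) ℝ) (h1 : Rdᵀ * Rd = 1) (h2 : Rd.det = 1) :
    vee (skew (Rdᵀ * B)) = Rdᵀ.mulVec (vee (skew (B * Rdᵀ))) := by
  have h1' : Rd * Rdᵀ = 1 := mul_eq_one_comm.mp h1
  have e1 : Rdᵀ * (B * Rdᵀ) * Rd = Rdᵀ * B := by
    rw [Matrix.mul_assoc Rdᵀ (B * Rdᵀ) Rd, Matrix.mul_assoc B Rdᵀ Rd, h1, Matrix.mul_one]
  have e2 : Rdᵀ * (Rd * Bᵀ) * Rd = Bᵀ * Rd := by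
    rw [← Matrix.mul_assoc Rdᵀ Rd Bᵀ, h1, Matrix.one_mul]
  have hs : skew (Rdᵀ * B) = Rdᵀ * skew (B * Rdᵀ) * Rd := by
    simp only [skew, Matrix.transpose_mul, Matrix.transpose_transpose,
      Matrix.mul_smul, Matrix.smul_mul]
    rw [Matrix.mul_sub, Matrix.sub_mul, e1, e2]
  set w := vee (skew (B * Rdᵀ)) with hw
  have hhat : hat w = skew (B * Rdᵀ) := hat_vee_skew _
  have hc := hat_conj Rd (Rdᵀ.mulVec w)
  rw [Matrix.mulVec_mulVec, h1', Matrix.one_mulVec, h2, one_smul] at hc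
  rw [hs, ← hhat, hc, vee_hat]

lemma claimC (Rt Rdt K : Matrix (Fin 3) (Fin 3) ℝ) (e : Fin 3 → ℝ)
    (h1 : Rdtᵀ * Rdt = 1) (h2 : Rdt.det = 1) :
    e ⬝ᵥ Rdtᵀ.mulVec (vee (skew (K * (Rt * Rdtᵀ)))) =
      -(1/2) * (K * (Rt * hat e * Rdtᵀ)).trace := by
  have ht : (K * (Rt * hat e * Rdtᵀ)).trace = ((Rdtᵀ * (K * Rt)) * hat e).trace := by
    rw [show K * (Rt * hat e * Rdtᵀ) = (K * (Rt * hat e)) * Rdtᵀ by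
      simp [Matrix.mul_assoc], Matrix.trace_mul_comm]
    simp [Matrix.mul_assoc]
  rw [ht, trace_mul_hat, vee_conj Rdt (K * Rt) h1 h2, show (K * Rt) * Rdtᵀ = K * (Rt * Rdtᵀ) by
    simp [Matrix.mul_assoc]]
  ring

lemma step1 (I : Matrix (Fin 3) (Fin 3) ℝ) (hsym : Iᵀ = I) (x y : Fin 3 → ℝ) :
    (1/2) * (∑ i, (y i * (∑ j, I i j * x j) + x i * (∑ j, I i j * y j))) =
      x ⬝ᵥ I.mulVec y := by
  have h01 : I 0 1 = I 1 0 := congrFun (congrFun hsym 1) 0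
  have h02 : I 0 2 = I 2 0 := congrFun (congrFun hsym 2) 0
  have h12 : I 1 2 = I 2 1 := congrFun (congrFun hsym 2) 1
  simp only [dotProduct, Matrix.mulVec, Fin.sum_univ_three]
  rw [h01, h02, h12]; ring

lemma step2 (K Rt Rdt : Matrix (Fin 3) (Fin 3) ℝ) (a b : Fin 3 → ℝ) :
    (1/2) * (∑ i, ∑ j, K i j *
      (-(∑ k, ((Rt * hat a) j k * Rdt i k + Rt j k * (Rdt * hat b) i k)))) =
    -(1/2) * (K * (Rt * hat (a - b) * Rdtᵀ)).trace := by
  simp [Matrix.trace, Matrix.mul_apply, hat, Fin.sum_univ_three, Matrix.transpose_apply,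
    Pi.sub_apply, Matrix.diag]
  ring

lemma step3 (a b u : Fin 3 → ℝ) :
    (a - b) ⬝ᵥ (crossProduct a) u = (a - b) ⬝ᵥ (crossProduct b) u := by
  simp [crossProduct, dotProduct, Fin.sum_univ_three, Pi.sub_apply]
  ring

lemma derivVal_eq11 (Imat Kω K Rt Rdt : Matrix (Fin 3) (Fin 3) ℝ)
    (a b a' b' : Fin 3 → ℝ)
    (hsym : Imatᵀ = Imat) (horth : Rdtᵀ * Rdt = 1) (hdet : Rdt.det = 1)
    (hdyn : Imat.mulVec a' = -(crossProduct a (Imat.mulVec a)) +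
        (-Rdtᵀ.mulVec (vee (skew (K * (Rt * Rdtᵀ)))) - Kω.mulVec (a - b) + Imat.mulVec b' +
          crossProduct b (Imat.mulVec a))) :
    (1/2) * (∑ i, ((a' i - b' i) * (∑ j, Imat i j * (a j - b j)) +
        (a i - b i) * (∑ j, Imat i j * (a' j - b' j)))) +
    (1/2) * (∑ i, ∑ j, K i j *
        (-(∑ k, ((Rt * hat a) j k * Rdt i k + Rt j k * (Rdt * hat b) i k)))) =
    -((a - b) ⬝ᵥ Kω.mulVec (a - b)) := by
  have e1 := step1 Imat hsym (a - b) (a' - b')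
  simp only [Pi.sub_apply] at e1
  rw [e1, step2]
  have e3 := claimC Rt Rdt K (a - b) horth hdet
  rw [← e3, Matrix.mulVec_sub, hdyn]
  simp only [dotProduct_add, dotProduct_sub, dotProduct_neg]
  have e4 := step3 a b (Imat.mulVec a)
  linarith [e4]

/-- Along the closed-loop attitude error dynamics with torque
τ_c = −R_dᵀe_R − K_ω e_ω + I ω̇_d + ω_d × Iω, the Lyapunov function
V_R = ½ e_ωᵀ I e_ω + Ψ(R_e) satisfies V̇_R = −e_ωᵀ K_ω e_ω ≤ 0. -/
theorem stmt_11 (Imat Kω : Matrix (Fin 3) (Fin 3) ℝ)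
    (hI : Imat.PosDef) (hKω : Kω.PosDef)
    (k₁ k₂ k₃ : ℝ) (hk₁ : 0 < k₁) (hk₂ : 0 < k₂) (hk₃ : 0 < k₃)
    (R Rd : ℝ → Matrix (Fin 3) (Fin 3) ℝ) (ω ωd ω' ωd' : ℝ → Fin 3 → ℝ)
    (hR : ∀ s, R s ∈ SO3) (hRd : ∀ s, Rd s ∈ SO3)
    (hdR : ∀ s (i j : Fin 3), HasDerivAt (fun u => R u i j) ((R s * hat (ω s)) i j) s)
    (hdRd : ∀ s (i j : Fin 3), HasDerivAt (fun u => Rd u i j) ((Rd s * hat (ωd s)) i j) s)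
    (hdω : ∀ s (i : Fin 3), HasDerivAt (fun u => ω u i) (ω' s i) s)
    (hdωd : ∀ s (i : Fin 3), HasDerivAt (fun u => ωd u i) (ωd' s i) s)
    (hdyn : ∀ s, Imat.mulVec (ω' s) =
      -(crossProduct (ω s) (Imat.mulVec (ω s))) +
        (-(Rd s)ᵀ.mulVec (vee (skew (Matrix.diagonal ![k₁, k₂, k₃] * (R s * (Rd s)ᵀ)))) -
          Kω.mulVec (ω s - ωd s) + Imat.mulVec (ωd' s) +
          crossProduct (ωd s) (Imat.mulVec (ω s)))) :
    ∀ t : ℝ,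
      HasDerivAt
        (fun s => (1/2) * ((ω s - ωd s) ⬝ᵥ Imat.mulVec (ω s - ωd s)) +
          Psi (Matrix.diagonal ![k₁, k₂, k₃]) (R s * (Rd s)ᵀ))
        (-((ω t - ωd t) ⬝ᵥ Kω.mulVec (ω t - ωd t))) t ∧
      -((ω t - ωd t) ⬝ᵥ Kω.mulVec (ω t - ωd t)) ≤ 0 := by
  intro t
  set K := Matrix.diagonal ![k₁, k₂, k₃] with hKdef
  constructor
  · have h1 : HasDerivAt (fun s => ∑ i, (ω s i - ωd s i) * (∑ j, Imat i j * (ω s j - ωd s j)))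
        (∑ i, ((ω' t i - ωd' t i) * (∑ j, Imat i j * (ω t j - ωd t j)) +
          (ω t i - ωd t i) * (∑ j, Imat i j * (ω' t j - ωd' t j)))) t :=
      HasDerivAt.fun_sum fun i _ => ((hdω t i).sub (hdωd t i)).mul
        (HasDerivAt.fun_sum fun j _ => ((hdω t j).sub (hdωd t j)).const_mul _)
    have h2 : HasDerivAt (fun s => ∑ i, ∑ j, K i j *
        ((1 : Matrix (Fin 3) (Fin 3) ℝ) j i - ∑ k, R s j k * Rd s i k))
        (∑ i, ∑ j, K i j *
          (-(∑ k, ((R t * hat (ω t)) j k * Rd t i k + R t j k * (Rd t * hat (ωd t)) i k)))) t :=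
      HasDerivAt.fun_sum fun i _ => HasDerivAt.fun_sum fun j _ =>
        (HasDerivAt.const_sub _ (HasDerivAt.fun_sum fun k _ =>
          (hdR t j k).mul (hdRd t i k))).const_mul _
    have hF := (h1.const_mul (1/2 : ℝ)).add (h2.const_mul (1/2 : ℝ))
    have hfun : (fun s => (1/2) * ((ω s - ωd s) ⬝ᵥ Imat.mulVec (ω s - ωd s)) +
        Psi K (R s * (Rd s)ᵀ)) =
        (fun s => (1/2) * (∑ i, (ω s i - ωd s i) * (∑ j, Imat i j * (ω s j - ωd s j))) +
          (1/2) * (∑ i, ∑ j, K i j *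
            ((1 : Matrix (Fin 3) (Fin 3) ℝ) j i - ∑ k, R s j k * Rd s i k))) := by
      funext s
      simp [Psi, Matrix.trace, Matrix.mul_apply, Matrix.sub_apply, dotProduct,
        Matrix.mulVec, Pi.sub_apply, Matrix.diag, mul_sub, Finset.mul_sum]
    rw [hfun]
    have hsymI : Imatᵀ = Imat := by
      have := hI.1
      exact (by simpa using this : Imat.IsSymm)
    have hD := derivVal_eq11 Imat Kω K (R t) (Rd t) (ω t) (ωd t) (ω' t) (ωd' t)
      hsymI (hRd t).1 (hRd t).2 (hdyn t)
    rw [← hD]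
    exact hF
  · have h := hKω.posSemidef.dotProduct_mulVec_nonneg (ω t - ωd t)
    have h' : (0:ℝ) ≤ (ω t - ωd t) ⬝ᵥ Kω.mulVec (ω t - ωd t) := by simpa using h
    linarith
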